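/- Let p* > 0 and assume 2·p*·Φ̃(α₀, ξ) < 1. Then there exists a unique continuous function u : [α₀, ξ] → ℝ satisfying the integral equation u(η) = (1 + p*·Φ(η, u))/(1 + p*·Φ(ξ, u)) for all η ∈ [α₀, ξ]. -/

import Mathlib

open Real MeasureTheory Set
open intervalIntegral

/-- `E(η,u) = exp(−(2/a)·∫_{α₀}^{η} s·N*(u(s))/L*(u(s)) ds)` -/
noncomputable def Efun (a : ℝ) (L N : ℝ → ℝ) (α₀ : ℝ) (u : ℝ → ℝ) (η : ℝ) : ℝ :=
  Real.exp (-(2 / a) * ∫ s in α₀..η, s * N (u s) / L (u s))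

/-- `Φ(η,u) = α₀^ν·∫_{α₀}^{η} E(v,u)/(v^ν·L*(u(v))) dv` -/
noncomputable def Phi (a ν : ℝ) (L N : ℝ → ℝ) (α₀ : ℝ) (u : ℝ → ℝ) (η : ℝ) : ℝ :=
  α₀ ^ ν * ∫ v in α₀..η, Efun a L N α₀ u v / (v ^ ν * L (u v))

/-- The Lipschitz bound `Φ̃(α₀, η)` from Lemma 4. -/
noncomputable def PhiTilde (a ν Lm NM Ltil Ntil α₀ η : ℝ) : ℝ :=
  (α₀ ^ ν / Lm ^ 2) *
    ((1 / a) * (Ntil + NM * Ltil / Lm) *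
        (η ^ (3 - ν) / (3 - ν) - α₀ ^ 2 * η ^ (1 - ν) / (1 - ν) +
          2 * α₀ ^ (3 - ν) / ((3 - ν) * (1 - ν))) +
      Ltil * (η ^ (1 - ν) - α₀ ^ (1 - ν)) / (1 - ν))



lemma exp_neg_lip {x y : ℝ} (hx : 0 ≤ x) (hy : 0 ≤ y) :
    |Real.exp (-x) - Real.exp (-y)| ≤ |x - y| := by
  wlog h : y ≤ x generalizing x y
  · rw [abs_sub_comm, abs_sub_comm x y]; exact this hy hx (le_of_not_ge h)
  rw [abs_of_nonpos (by simp [Real.exp_le_exp, h]), abs_of_nonneg (sub_nonneg.2 h), neg_sub]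
  have h1 : Real.exp (-y) - Real.exp (-x) = Real.exp (-y) * (1 - Real.exp (-(x - y))) := by
    rw [mul_sub, mul_one, ← Real.exp_add]; ring_nf
  rw [h1]
  have h2 : Real.exp (-y) ≤ 1 := Real.exp_le_one_iff.2 (by linarith)
  have h3 : 1 - Real.exp (-(x - y)) ≤ x - y := by
    have := Real.add_one_le_exp (-(x - y)); linarith
  have h4 : 0 ≤ 1 - Real.exp (-(x-y)) := by
    have : Real.exp (-(x-y)) ≤ 1 := Real.exp_le_one_iff.2 (by linarith)
    linarith
  calc Real.exp (-y) * (1 - Real.exp (-(x - y))) ≤ 1 * (x - y) :=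
        mul_le_mul h2 h3 h4 one_pos.le
    _ = x - y := one_mul _

-- Lipschitz bound for 1/L
lemma inv_lip {L : ℝ → ℝ} {Lm Ltil : ℝ} (hLm : 0 < Lm) (hLtil : 0 < Ltil) (hL : ∀ x, Lm ≤ L x)
    (hLlip : ∀ x y : ℝ, |L x - L y| ≤ Ltil * |x - y|) (x y : ℝ) :
    |1 / L x - 1 / L y| ≤ Ltil / Lm ^ 2 * |x - y| := by
  have hx : 0 < L x := hLm.trans_le (hL x)
  have hy : 0 < L y := hLm.trans_le (hL y)
  have h1 : 1 / L x - 1 / L y = (L y - L x) / (L x * L y) := by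
    field_simp
  rw [h1, abs_div, abs_of_pos (mul_pos hx hy)]
  have h2 : |L y - L x| ≤ Ltil * |x - y| := by
    rw [abs_sub_comm]; exact hLlip x y
  have h3 : Lm ^ 2 ≤ L x * L y := by
    calc Lm ^ 2 = Lm * Lm := sq Lm
    _ ≤ L x * L y := mul_le_mul (hL x) (hL y) hLm.le hx.le
  calc |L y - L x| / (L x * L y) ≤ (Ltil * |x - y|) / Lm ^ 2 :=
        div_le_div₀ (by positivity) h2 (by positivity) h3
    _ = Ltil / Lm ^ 2 * |x - y| := by ring

-- Lipschitz bound for N/L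
lemma ratio_lip {L N : ℝ → ℝ} {Lm NM Ltil Ntil : ℝ} (hLm : 0 < Lm) (hLtil : 0 < Ltil) (hNtil : 0 < Ntil)
    (hL : ∀ x, Lm ≤ L x) (hN0 : ∀ x, 0 ≤ N x) (hNM : ∀ x, N x ≤ NM)
    (hLlip : ∀ x y : ℝ, |L x - L y| ≤ Ltil * |x - y|)
    (hNlip : ∀ x y : ℝ, |N x - N y| ≤ Ntil * |x - y|) (x y : ℝ) :
    |N x / L x - N y / L y| ≤ (Ntil / Lm + NM * (Ltil / Lm ^ 2)) * |x - y| := by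
  have hx : 0 < L x := hLm.trans_le (hL x)
  have hy : 0 < L y := hLm.trans_le (hL y)
  have h1 : N x / L x - N y / L y = (N x - N y) / L x + N y * (1 / L x - 1 / L y) := by
    field_simp; ring
  rw [h1]
  have hNMnn : 0 ≤ NM := (hN0 x).trans (hNM x)
  have t1 : |(N x - N y) / L x| ≤ Ntil / Lm * |x - y| := by
    rw [abs_div, abs_of_pos hx]
    calc |N x - N y| / L x ≤ (Ntil * |x - y|) / Lm :=
          div_le_div₀ (by positivity) (hNlip x y) hLm (hL x)
      _ = Ntil / Lm * |x - y| := by ring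
  have t2 : |N y * (1 / L x - 1 / L y)| ≤ NM * (Ltil / Lm ^ 2) * |x - y| := by
    rw [abs_mul, abs_of_nonneg (hN0 y)]
    calc N y * |1 / L x - 1 / L y| ≤ NM * (Ltil / Lm ^ 2 * |x - y|) :=
          mul_le_mul (hNM y) (inv_lip hLm hLtil hL hLlip x y) (abs_nonneg _) hNMnn
      _ = NM * (Ltil / Lm ^ 2) * |x - y| := by ring
  calc |(N x - N y) / L x + N y * (1 / L x - 1 / L y)| ≤ _ + _ := abs_add_le _ _
    _ ≤ Ntil / Lm * |x - y| + NM * (Ltil / Lm ^ 2) * |x - y| := add_le_add t1 t2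
    _ = (Ntil / Lm + NM * (Ltil / Lm ^ 2)) * |x - y| := by ring


section Main
variable {a ν α₀ ξ : ℝ} {L N : ℝ → ℝ} {Lm NM Ltil Ntil : ℝ} {u : ℝ → ℝ}

lemma g_cont (hLm : 0 < Lm) (hL : ∀ x, Lm ≤ L x) (hLcont : Continuous L)
    (hNcont : Continuous N) (hu : Continuous u) :
    Continuous (fun s => s * N (u s) / L (u s)) :=
  (continuous_id.mul (hNcont.comp hu)).div (hLcont.comp hu)
    (fun s => (hLm.trans_le (hL _)).ne')

lemma X_nonneg (hα₀ : 0 < α₀) (hLm : 0 < Lm) (hL : ∀ x, Lm ≤ L x)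
    (hN0 : ∀ x, 0 ≤ N x) {s : ℝ} (hs : α₀ ≤ s) :
    0 ≤ ∫ t in α₀..s, t * N (u t) / L (u t) := by
  apply intervalIntegral.integral_nonneg hs
  intro t ht
  have ht0 : 0 ≤ t := le_trans hα₀.le ht.1
  have h1 := hLm.trans_le (hL (u t))
  have h2 := hN0 (u t)
  positivity

lemma E_cont (hLm : 0 < Lm) (hL : ∀ x, Lm ≤ L x) (hLcont : Continuous L)
    (hNcont : Continuous N) (hu : Continuous u) :
    Continuous (Efun a L N α₀ u) := by
  unfold Efun
  exact Real.continuous_exp.comp (continuous_const.mul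
    (intervalIntegral.continuous_primitive
      (fun c d => ((g_cont hLm hL hLcont hNcont hu).intervalIntegrable c d)) α₀))

lemma E_pos {s : ℝ} : 0 < Efun a L N α₀ u s := Real.exp_pos _

lemma E_le_one (ha : 0 < a) (hα₀ : 0 < α₀) (hLm : 0 < Lm) (hL : ∀ x, Lm ≤ L x)
    (hN0 : ∀ x, 0 ≤ N x) {s : ℝ} (hs : α₀ ≤ s) : Efun a L N α₀ u s ≤ 1 := by
  unfold Efun
  rw [Real.exp_le_one_iff]
  have h1 := X_nonneg (u := u) (L := L) (N := N) hα₀ hLm hL hN0 hs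
  have h2 : (0:ℝ) ≤ 2 / a := by positivity
  nlinarith

lemma f_contOn (hν0 : 0 < ν) (hα₀ : 0 < α₀) (hLm : 0 < Lm) (hL : ∀ x, Lm ≤ L x)
    (hLcont : Continuous L) (hNcont : Continuous N) (hu : Continuous u) :
    ContinuousOn (fun s => Efun a L N α₀ u s / (s ^ ν * L (u s))) (Icc α₀ ξ) := by
  apply ContinuousOn.div
  · exact (E_cont hLm hL hLcont hNcont hu).continuousOn
  · apply ContinuousOn.mul
    · exact ContinuousOn.rpow_const continuousOn_id
        (fun s hs => Or.inl (hα₀.trans_le hs.1).ne')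
    · exact (hLcont.comp hu).continuousOn
  · intro s hs
    have hs0 : 0 < s := hα₀.trans_le hs.1
    have h1 : 0 < s ^ ν := Real.rpow_pos_of_pos hs0 ν
    have h2 := hLm.trans_le (hL (u s))
    positivity

lemma f_nonneg (hα₀ : 0 < α₀) (hLm : 0 < Lm) (hL : ∀ x, Lm ≤ L x)
    {s : ℝ} (hs : α₀ ≤ s) :
    0 ≤ Efun a L N α₀ u s / (s ^ ν * L (u s)) := by
  have hs0 : 0 < s := hα₀.trans_le hs
  have h1 : 0 < s ^ ν := Real.rpow_pos_of_pos hs0 ν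
  have h2 := hLm.trans_le (hL (u s))
  have h3 : 0 < Efun a L N α₀ u s := Real.exp_pos _
  positivity


lemma f_intInt (hν0 : 0 < ν) (hα₀ : 0 < α₀) (hLm : 0 < Lm) (hL : ∀ x, Lm ≤ L x)
    (hLcont : Continuous L) (hNcont : Continuous N) (hu : Continuous u)
    {η : ℝ} (hη : η ∈ Icc α₀ ξ) :
    IntervalIntegrable (fun s => Efun a L N α₀ u s / (s ^ ν * L (u s))) volume α₀ η := by
  have hsub : uIcc α₀ η ⊆ Icc α₀ ξ := by
    rw [uIcc_of_le hη.1]; exact Icc_subset_Icc le_rfl hη.2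
  exact ((f_contOn hν0 hα₀ hLm hL hLcont hNcont hu).mono hsub).intervalIntegrable

lemma Phi_contOn (hν0 : 0 < ν) (hα₀ : 0 < α₀) (hαξ : α₀ ≤ ξ) (hLm : 0 < Lm)
    (hL : ∀ x, Lm ≤ L x) (hLcont : Continuous L) (hNcont : Continuous N)
    (hu : Continuous u) :
    ContinuousOn (Phi a ν L N α₀ u) (Icc α₀ ξ) := by
  unfold Phi
  apply ContinuousOn.mul continuousOn_const
  have hint : IntegrableOn (fun s => Efun a L N α₀ u s / (s ^ ν * L (u s)))
      (uIcc α₀ ξ) volume := by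
    rw [uIcc_of_le hαξ]
    exact (f_contOn hν0 hα₀ hLm hL hLcont hNcont hu).integrableOn_Icc
  have h := intervalIntegral.continuousOn_primitive_interval hint
  rwa [uIcc_of_le hαξ] at h

lemma Phi_nonneg (hν0 : 0 < ν) (hα₀ : 0 < α₀) (hLm : 0 < Lm) (hL : ∀ x, Lm ≤ L x)
    {η : ℝ} (hη : α₀ ≤ η) : 0 ≤ Phi a ν L N α₀ u η := by
  unfold Phi
  apply mul_nonneg (Real.rpow_nonneg hα₀.le ν)
  exact intervalIntegral.integral_nonneg hη (fun s hs => f_nonneg hα₀ hLm hL hs.1)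

lemma Phi_mono (hν0 : 0 < ν) (hα₀ : 0 < α₀) (hLm : 0 < Lm)
    (hL : ∀ x, Lm ≤ L x) (hLcont : Continuous L) (hNcont : Continuous N)
    (hu : Continuous u) {η : ℝ} (hη : η ∈ Icc α₀ ξ) :
    Phi a ν L N α₀ u η ≤ Phi a ν L N α₀ u ξ := by
  unfold Phi
  apply mul_le_mul_of_nonneg_left _ (Real.rpow_nonneg hα₀.le ν)
  apply intervalIntegral.integral_mono_interval le_rfl hη.1 hη.2
  · filter_upwards [ae_restrict_mem measurableSet_Ioc] with s hs
    simpa using f_nonneg (ν := ν) (hα₀ := hα₀) hLm hL hs.1.le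
  · exact f_intInt hν0 hα₀ hLm hL hLcont hNcont hu
      (mem_Icc.2 ⟨hη.1.trans hη.2, le_rfl⟩)

end Main


section Est
variable {a ν α₀ ξ : ℝ} {L N : ℝ → ℝ} {Lm NM Ltil Ntil : ℝ} {u v : ℝ → ℝ} {M : ℝ}

lemma X_diff (ha : 0 < a) (hα₀ : 0 < α₀) (hLm : 0 < Lm) (hLtil : 0 < Ltil)
    (hNtil : 0 < Ntil) (hL : ∀ x, Lm ≤ L x) (hN0 : ∀ x, 0 ≤ N x) (hNM : ∀ x, N x ≤ NM)
    (hLlip : ∀ x y : ℝ, |L x - L y| ≤ Ltil * |x - y|)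
    (hNlip : ∀ x y : ℝ, |N x - N y| ≤ Ntil * |x - y|)
    (hLcont : Continuous L) (hNcont : Continuous N)
    (hu : Continuous u) (hv : Continuous v)
    (hM : 0 ≤ M) (huv : ∀ t ∈ Icc α₀ ξ, |u t - v t| ≤ M)
    {s : ℝ} (hs : s ∈ Icc α₀ ξ) :
    |(∫ t in α₀..s, t * N (u t) / L (u t)) - ∫ t in α₀..s, t * N (v t) / L (v t)|
      ≤ (Ntil / Lm + NM * (Ltil / Lm ^ 2)) * M * ((s ^ 2 - α₀ ^ 2) / 2) := by
  have hNM0 : 0 ≤ NM := (hN0 0).trans (hNM 0)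
  set K := Ntil / Lm + NM * (Ltil / Lm ^ 2) with hK
  have hKnn : 0 ≤ K := by positivity
  have hgu := g_cont (u := u) hLm hL hLcont hNcont hu
  have hgv := g_cont (u := v) hLm hL hLcont hNcont hv
  rw [← intervalIntegral.integral_sub (hgu.intervalIntegrable α₀ s)
    (hgv.intervalIntegrable α₀ s)]
  have step1 := intervalIntegral.abs_integral_le_integral_abs (μ := volume)
    (f := fun t => t * N (u t) / L (u t) - t * N (v t) / L (v t)) hs.1
  refine step1.trans ?_
  have step2 : (∫ t in α₀..s, |t * N (u t) / L (u t) - t * N (v t) / L (v t)|)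
      ≤ ∫ t in α₀..s, K * M * t := by
    apply intervalIntegral.integral_mono_on hs.1
    · exact ((hgu.sub hgv).abs).intervalIntegrable α₀ s
    · exact (continuous_const.mul continuous_id).intervalIntegrable α₀ s
    · intro t ht
      have ht0 : 0 ≤ t := hα₀.le.trans ht.1
      have htI : t ∈ Icc α₀ ξ := ⟨ht.1, ht.2.trans hs.2⟩
      have e1 : t * N (u t) / L (u t) - t * N (v t) / L (v t)
          = t * (N (u t) / L (u t) - N (v t) / L (v t)) := by ring
      rw [e1, abs_mul, abs_of_nonneg ht0]
      calc t * |N (u t) / L (u t) - N (v t) / L (v t)|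
          ≤ t * (K * M) := by
            apply mul_le_mul_of_nonneg_left _ ht0
            calc |N (u t) / L (u t) - N (v t) / L (v t)| ≤ K * |u t - v t| :=
                  ratio_lip hLm hLtil hNtil hL hN0 hNM hLlip hNlip _ _
              _ ≤ K * M := mul_le_mul_of_nonneg_left (huv t htI) hKnn
        _ = K * M * t := by ring
  refine step2.trans ?_
  rw [intervalIntegral.integral_const_mul, integral_id]

lemma E_diff (ha : 0 < a) (hα₀ : 0 < α₀) (hLm : 0 < Lm) (hLtil : 0 < Ltil)
    (hNtil : 0 < Ntil) (hL : ∀ x, Lm ≤ L x) (hN0 : ∀ x, 0 ≤ N x) (hNM : ∀ x, N x ≤ NM)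
    (hLlip : ∀ x y : ℝ, |L x - L y| ≤ Ltil * |x - y|)
    (hNlip : ∀ x y : ℝ, |N x - N y| ≤ Ntil * |x - y|)
    (hLcont : Continuous L) (hNcont : Continuous N)
    (hu : Continuous u) (hv : Continuous v)
    (hM : 0 ≤ M) (huv : ∀ t ∈ Icc α₀ ξ, |u t - v t| ≤ M)
    {s : ℝ} (hs : s ∈ Icc α₀ ξ) :
    |Efun a L N α₀ u s - Efun a L N α₀ v s|
      ≤ 1 / a * (Ntil / Lm + NM * (Ltil / Lm ^ 2)) * M * (s ^ 2 - α₀ ^ 2) := by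
  unfold Efun
  have hXu := X_nonneg (u := u) (L := L) (N := N) hα₀ hLm hL hN0 hs.1
  have hXv := X_nonneg (u := v) (L := L) (N := N) hα₀ hLm hL hN0 hs.1
  have h2a : (0:ℝ) ≤ 2 / a := by positivity
  have e1 : ∀ I : ℝ, -(2/a) * I = -(2/a * I) := fun I => by ring
  rw [e1, e1]
  calc |Real.exp (-(2/a * ∫ t in α₀..s, t * N (u t) / L (u t)))
        - Real.exp (-(2/a * ∫ t in α₀..s, t * N (v t) / L (v t)))|
      ≤ |2/a * (∫ t in α₀..s, t * N (u t) / L (u t))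
        - 2/a * ∫ t in α₀..s, t * N (v t) / L (v t)| :=
        exp_neg_lip (mul_nonneg h2a hXu) (mul_nonneg h2a hXv)
    _ = 2/a * |(∫ t in α₀..s, t * N (u t) / L (u t))
        - ∫ t in α₀..s, t * N (v t) / L (v t)| := by
        rw [← mul_sub, abs_mul, abs_of_nonneg h2a]
    _ ≤ 2/a * ((Ntil / Lm + NM * (Ltil / Lm ^ 2)) * M * ((s ^ 2 - α₀ ^ 2) / 2)) :=
        mul_le_mul_of_nonneg_left (X_diff ha hα₀ hLm hLtil hNtil hL hN0 hNM hLlip hNlip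
          hLcont hNcont hu hv hM huv hs) h2a
    _ = 1 / a * (Ntil / Lm + NM * (Ltil / Lm ^ 2)) * M * (s ^ 2 - α₀ ^ 2) := by ring

end Est

section Est2
variable {a ν α₀ ξ : ℝ} {L N : ℝ → ℝ} {Lm NM Ltil Ntil : ℝ} {u v : ℝ → ℝ} {M : ℝ}

lemma f_diff (ha : 0 < a) (hν0 : 0 < ν) (hα₀ : 0 < α₀) (hLm : 0 < Lm) (hLtil : 0 < Ltil)
    (hNtil : 0 < Ntil) (hL : ∀ x, Lm ≤ L x) (hN0 : ∀ x, 0 ≤ N x) (hNM : ∀ x, N x ≤ NM)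
    (hLlip : ∀ x y : ℝ, |L x - L y| ≤ Ltil * |x - y|)
    (hNlip : ∀ x y : ℝ, |N x - N y| ≤ Ntil * |x - y|)
    (hLcont : Continuous L) (hNcont : Continuous N)
    (hu : Continuous u) (hv : Continuous v)
    (hM : 0 ≤ M) (huv : ∀ t ∈ Icc α₀ ξ, |u t - v t| ≤ M)
    {s : ℝ} (hs : s ∈ Icc α₀ ξ) :
    |Efun a L N α₀ u s / (s ^ ν * L (u s)) - Efun a L N α₀ v s / (s ^ ν * L (v s))|
      ≤ (1 / Lm ^ 2 * (1 / a * (Ntil + NM * Ltil / Lm)) * (s ^ 2 - α₀ ^ 2)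
          + 1 / Lm ^ 2 * Ltil) * (s ^ ν)⁻¹ * M := by
  have hs0 : 0 < s := hα₀.trans_le hs.1
  have hsν : 0 < s ^ ν := Real.rpow_pos_of_pos hs0 ν
  have hLu : 0 < L (u s) := hLm.trans_le (hL _)
  have hLv : 0 < L (v s) := hLm.trans_le (hL _)
  set Eu := Efun a L N α₀ u s with hEu
  set Ev := Efun a L N α₀ v s with hEv
  have hEvpos : 0 < Ev := Real.exp_pos _
  have hEv1 : Ev ≤ 1 := E_le_one ha hα₀ hLm hL hN0 hs.1
  have e1 : Eu / (s ^ ν * L (u s)) - Ev / (s ^ ν * L (v s))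
      = (Eu / L (u s) - Ev / L (v s)) * (s ^ ν)⁻¹ := by
    field_simp
  rw [e1, abs_mul, abs_of_nonneg (inv_nonneg.2 hsν.le)]
  have e2 : Eu / L (u s) - Ev / L (v s)
      = (Eu - Ev) * (1 / L (u s)) + Ev * (1 / L (u s) - 1 / L (v s)) := by
    field_simp; ring
  have hNM0 : 0 ≤ NM := (hN0 0).trans (hNM 0)
  have hssq : 0 ≤ s ^ 2 - α₀ ^ 2 := by nlinarith [hs.1, hα₀.le]
  have t1 : |(Eu - Ev) * (1 / L (u s))|
      ≤ 1 / a * (Ntil / Lm + NM * (Ltil / Lm ^ 2)) * M * (s ^ 2 - α₀ ^ 2) * (1 / Lm) := by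
    rw [abs_mul, abs_of_nonneg (by positivity : (0:ℝ) ≤ 1 / L (u s))]
    apply mul_le_mul
    · exact E_diff ha hα₀ hLm hLtil hNtil hL hN0 hNM hLlip hNlip hLcont hNcont hu hv hM huv hs
    · exact one_div_le_one_div_of_le hLm (hL _)
    · positivity
    · positivity
  have t2 : |Ev * (1 / L (u s) - 1 / L (v s))| ≤ 1 * (Ltil / Lm ^ 2 * M) := by
    rw [abs_mul, abs_of_nonneg hEvpos.le]
    apply mul_le_mul hEv1 _ (abs_nonneg _) one_pos.le
    calc |1 / L (u s) - 1 / L (v s)| ≤ Ltil / Lm ^ 2 * |u s - v s| :=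
          inv_lip hLm hLtil hL hLlip _ _
      _ ≤ Ltil / Lm ^ 2 * M := mul_le_mul_of_nonneg_left (huv s hs) (by positivity)
  have t3 : |Eu / L (u s) - Ev / L (v s)|
      ≤ (1 / Lm ^ 2 * (1 / a * (Ntil + NM * Ltil / Lm)) * (s ^ 2 - α₀ ^ 2)
        + 1 / Lm ^ 2 * Ltil) * M := by
    rw [e2]
    calc |(Eu - Ev) * (1 / L (u s)) + Ev * (1 / L (u s) - 1 / L (v s))|
        ≤ _ + _ := abs_add_le _ _
      _ ≤ 1 / a * (Ntil / Lm + NM * (Ltil / Lm ^ 2)) * M * (s ^ 2 - α₀ ^ 2) * (1 / Lm)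
          + 1 * (Ltil / Lm ^ 2 * M) := add_le_add t1 t2
      _ = (1 / Lm ^ 2 * (1 / a * (Ntil + NM * Ltil / Lm)) * (s ^ 2 - α₀ ^ 2)
          + 1 / Lm ^ 2 * Ltil) * M := by ring
  calc |Eu / L (u s) - Ev / L (v s)| * (s ^ ν)⁻¹
      ≤ ((1 / Lm ^ 2 * (1 / a * (Ntil + NM * Ltil / Lm)) * (s ^ 2 - α₀ ^ 2)
          + 1 / Lm ^ 2 * Ltil) * M) * (s ^ ν)⁻¹ :=
        mul_le_mul_of_nonneg_right t3 (inv_nonneg.2 hsν.le)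
    _ = (1 / Lm ^ 2 * (1 / a * (Ntil + NM * Ltil / Lm)) * (s ^ 2 - α₀ ^ 2)
          + 1 / Lm ^ 2 * Ltil) * (s ^ ν)⁻¹ * M := by ring

end Est2

section Comp
variable {a ν α₀ ξ : ℝ} {Lm NM Ltil Ntil : ℝ}

lemma hc_contOn (hν0 : 0 < ν) (hα₀ : 0 < α₀) (c₁ c₂ : ℝ) :
    ContinuousOn (fun s : ℝ => (c₁ * (s ^ 2 - α₀ ^ 2) + c₂) * (s ^ ν)⁻¹) (Icc α₀ ξ) := by
  apply ContinuousOn.mul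
  · exact (continuousOn_const.mul ((continuousOn_pow 2).sub continuousOn_const)).add
      continuousOn_const
  · apply ContinuousOn.inv₀
    · exact ContinuousOn.rpow_const continuousOn_id
        (fun s hs => Or.inl (hα₀.trans_le hs.1).ne')
    · exact fun s hs => (Real.rpow_pos_of_pos (hα₀.trans_le hs.1) ν).ne'

lemma integral_hc (hν0 : 0 < ν) (hν1 : ν < 1) (hα₀ : 0 < α₀) (hαξ : α₀ ≤ ξ) (c₁ c₂ : ℝ) :
    ∫ s in α₀..ξ, (c₁ * (s ^ 2 - α₀ ^ 2) + c₂) * (s ^ ν)⁻¹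
      = c₁ * ((ξ ^ (3 - ν) - α₀ ^ (3 - ν)) / (3 - ν))
        + (c₂ - c₁ * α₀ ^ 2) * ((ξ ^ (1 - ν) - α₀ ^ (1 - ν)) / (1 - ν)) := by
  have hcongr : ∀ s ∈ uIcc α₀ ξ,
      (c₁ * (s ^ 2 - α₀ ^ 2) + c₂) * (s ^ ν)⁻¹
        = c₁ * s ^ (2 - ν) + (c₂ - c₁ * α₀ ^ 2) * s ^ (-ν) := by
    intro s hs
    rw [uIcc_of_le hαξ] at hs
    have hs0 : 0 < s := hα₀.trans_le hs.1
    have e1 : s ^ (2 - ν) = s ^ 2 * (s ^ ν)⁻¹ := by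
      rw [Real.rpow_sub hs0, Real.rpow_two, div_eq_mul_inv]
    have e2 : s ^ (-ν) = (s ^ ν)⁻¹ := Real.rpow_neg hs0.le ν
    rw [e1, e2]; ring
  rw [intervalIntegral.integral_congr hcongr]
  have i1 : IntervalIntegrable (fun s : ℝ => s ^ (2 - ν)) volume α₀ ξ :=
    intervalIntegral.intervalIntegrable_rpow' (by linarith)
  have i2 : IntervalIntegrable (fun s : ℝ => s ^ (-ν)) volume α₀ ξ :=
    intervalIntegral.intervalIntegrable_rpow' (by linarith)
  rw [intervalIntegral.integral_add (i1.const_mul c₁) (i2.const_mul _),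
    intervalIntegral.integral_const_mul, intervalIntegral.integral_const_mul,
    integral_rpow (Or.inl (by linarith : (-1:ℝ) < 2 - ν)),
    integral_rpow (Or.inl (by linarith : (-1:ℝ) < -ν)),
    show (2 - ν + 1 : ℝ) = 3 - ν by ring, show (-ν + 1 : ℝ) = 1 - ν by ring]

lemma PhiTilde_eq (ha : 0 < a) (hν0 : 0 < ν) (hν1 : ν < 1) (hα₀ : 0 < α₀) (hαξ : α₀ ≤ ξ)
    (hLm : 0 < Lm) :
    α₀ ^ ν * ∫ s in α₀..ξ,
        (1 / Lm ^ 2 * (1 / a * (Ntil + NM * Ltil / Lm)) * (s ^ 2 - α₀ ^ 2)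
          + 1 / Lm ^ 2 * Ltil) * (s ^ ν)⁻¹
      = PhiTilde a ν Lm NM Ltil Ntil α₀ ξ := by
  have hcongr : ∀ s ∈ uIcc α₀ ξ,
      (1 / Lm ^ 2 * (1 / a * (Ntil + NM * Ltil / Lm)) * (s ^ 2 - α₀ ^ 2)
          + 1 / Lm ^ 2 * Ltil) * (s ^ ν)⁻¹
        = ((1 / Lm ^ 2 * (1 / a * (Ntil + NM * Ltil / Lm))) * (s ^ 2 - α₀ ^ 2)
          + 1 / Lm ^ 2 * Ltil) * (s ^ ν)⁻¹ := fun s _ => rfl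
  rw [intervalIntegral.integral_congr hcongr,
    integral_hc hν0 hν1 hα₀ hαξ (1 / Lm ^ 2 * (1 / a * (Ntil + NM * Ltil / Lm))) (1 / Lm ^ 2 * Ltil)]
  have hrw : α₀ ^ (3 - ν) = α₀ ^ 2 * α₀ ^ (1 - ν) := by
    rw [show (3 - ν : ℝ) = 2 + (1 - ν) by ring, Real.rpow_add hα₀, Real.rpow_two]
  unfold PhiTilde
  rw [hrw]
  have h3ν : (3 - ν : ℝ) ≠ 0 := by linarith
  have h1ν : (1 - ν : ℝ) ≠ 0 := by linarith
  field_simp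
  ring

lemma PhiTilde_nonneg (ha : 0 < a) (hν0 : 0 < ν) (hν1 : ν < 1) (hα₀ : 0 < α₀) (hαξ : α₀ ≤ ξ)
    (hLm : 0 < Lm) (hLtil : 0 < Ltil) (hNtil : 0 < Ntil) (hNM0 : 0 ≤ NM) :
    0 ≤ PhiTilde a ν Lm NM Ltil Ntil α₀ ξ := by
  rw [← PhiTilde_eq ha hν0 hν1 hα₀ hαξ hLm]
  apply mul_nonneg (Real.rpow_nonneg hα₀.le ν)
  apply intervalIntegral.integral_nonneg hαξ
  intro s hs
  have hs0 : 0 < s := hα₀.trans_le hs.1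
  have hssq : 0 ≤ s ^ 2 - α₀ ^ 2 := by nlinarith [hs.1]
  have hsν : 0 < s ^ ν := Real.rpow_pos_of_pos hs0 ν
  positivity

end Comp

section Lip
variable {a ν α₀ ξ : ℝ} {L N : ℝ → ℝ} {Lm NM Ltil Ntil : ℝ} {u v : ℝ → ℝ} {M : ℝ}

lemma Phi_lip (ha : 0 < a) (hν0 : 0 < ν) (hν1 : ν < 1) (hα₀ : 0 < α₀) (hαξ : α₀ ≤ ξ)
    (hLm : 0 < Lm) (hLtil : 0 < Ltil) (hNtil : 0 < Ntil)
    (hL : ∀ x, Lm ≤ L x) (hN0 : ∀ x, 0 ≤ N x) (hNM : ∀ x, N x ≤ NM)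
    (hLlip : ∀ x y : ℝ, |L x - L y| ≤ Ltil * |x - y|)
    (hNlip : ∀ x y : ℝ, |N x - N y| ≤ Ntil * |x - y|)
    (hLcont : Continuous L) (hNcont : Continuous N)
    (hu : Continuous u) (hv : Continuous v)
    (hM : 0 ≤ M) (huv : ∀ t ∈ Icc α₀ ξ, |u t - v t| ≤ M)
    {η : ℝ} (hη : η ∈ Icc α₀ ξ) :
    |Phi a ν L N α₀ u η - Phi a ν L N α₀ v η|
      ≤ PhiTilde a ν Lm NM Ltil Ntil α₀ ξ * M := by
  have hrnn : (0:ℝ) ≤ α₀ ^ ν := Real.rpow_nonneg hα₀.le ν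
  set c₁ := 1 / Lm ^ 2 * (1 / a * (Ntil + NM * Ltil / Lm)) with hc₁
  set c₂ := 1 / Lm ^ 2 * Ltil with hc₂
  have hintu := f_intInt (a := a) (u := u) hν0 hα₀ hLm hL hLcont hNcont hu hη
  have hintv := f_intInt (a := a) (u := v) hν0 hα₀ hLm hL hLcont hNcont hv hη
  have hsubη : Icc α₀ η ⊆ Icc α₀ ξ := Icc_subset_Icc le_rfl hη.2
  have hhcint : IntervalIntegrable
      (fun s : ℝ => (c₁ * (s ^ 2 - α₀ ^ 2) + c₂) * (s ^ ν)⁻¹) volume α₀ η := by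
    apply ContinuousOn.intervalIntegrable
    rw [uIcc_of_le hη.1]
    exact (hc_contOn hν0 hα₀ c₁ c₂).mono hsubη
  have hhcintξ : IntervalIntegrable
      (fun s : ℝ => (c₁ * (s ^ 2 - α₀ ^ 2) + c₂) * (s ^ ν)⁻¹) volume α₀ ξ := by
    apply ContinuousOn.intervalIntegrable
    rw [uIcc_of_le hαξ]
    exact hc_contOn hν0 hα₀ c₁ c₂
  unfold Phi
  rw [← mul_sub, abs_mul, abs_of_nonneg hrnn,
    ← intervalIntegral.integral_sub hintu hintv]
  have stepA : |∫ s in α₀..η, (Efun a L N α₀ u s / (s ^ ν * L (u s))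
        - Efun a L N α₀ v s / (s ^ ν * L (v s)))|
      ≤ ∫ s in α₀..η, (c₁ * (s ^ 2 - α₀ ^ 2) + c₂) * (s ^ ν)⁻¹ * M := by
    refine (intervalIntegral.abs_integral_le_integral_abs hη.1).trans ?_
    apply intervalIntegral.integral_mono_on hη.1 ((hintu.sub hintv).abs)
      (hhcint.mul_const M)
    intro s hs
    have hb := f_diff ha hν0 hα₀ hLm hLtil hNtil hL hN0 hNM hLlip hNlip hLcont hNcont
      hu hv hM huv (hsubη hs)
    refine hb.trans (le_of_eq ?_)
    rw [hc₁, hc₂]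
  have stepB : (∫ s in α₀..η, (c₁ * (s ^ 2 - α₀ ^ 2) + c₂) * (s ^ ν)⁻¹ * M)
      = (∫ s in α₀..η, (c₁ * (s ^ 2 - α₀ ^ 2) + c₂) * (s ^ ν)⁻¹) * M :=
    intervalIntegral.integral_mul_const M _
  have hNM0 : 0 ≤ NM := (hN0 0).trans (hNM 0)
  have stepC : (∫ s in α₀..η, (c₁ * (s ^ 2 - α₀ ^ 2) + c₂) * (s ^ ν)⁻¹)
      ≤ ∫ s in α₀..ξ, (c₁ * (s ^ 2 - α₀ ^ 2) + c₂) * (s ^ ν)⁻¹ := by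
    apply intervalIntegral.integral_mono_interval le_rfl hη.1 hη.2 _ hhcintξ
    filter_upwards [ae_restrict_mem measurableSet_Ioc] with s hs
    have hs0 : 0 < s := hα₀.trans hs.1
    have hssq : 0 ≤ s ^ 2 - α₀ ^ 2 := by nlinarith [hs.1.le]
    have hsν : 0 < s ^ ν := Real.rpow_pos_of_pos hs0 ν
    have hc1nn : 0 ≤ c₁ := by rw [hc₁]; positivity
    have hc2nn : 0 ≤ c₂ := by rw [hc₂]; positivity
    simpa using mul_nonneg (by positivity) (inv_nonneg.2 hsν.le)
  calc α₀ ^ ν * |∫ s in α₀..η, (Efun a L N α₀ u s / (s ^ ν * L (u s))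
        - Efun a L N α₀ v s / (s ^ ν * L (v s)))|
      ≤ α₀ ^ ν * ((∫ s in α₀..η, (c₁ * (s ^ 2 - α₀ ^ 2) + c₂) * (s ^ ν)⁻¹) * M) := by
        apply mul_le_mul_of_nonneg_left _ hrnn
        rw [← stepB]; exact stepA
    _ ≤ α₀ ^ ν * ((∫ s in α₀..ξ, (c₁ * (s ^ 2 - α₀ ^ 2) + c₂) * (s ^ ν)⁻¹) * M) :=
        mul_le_mul_of_nonneg_left (mul_le_mul_of_nonneg_right stepC hM) hrnn
    _ = PhiTilde a ν Lm NM Ltil Ntil α₀ ξ * M := by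
        rw [← mul_assoc, PhiTilde_eq ha hν0 hν1 hα₀ hαξ hLm]

end Lip

-- quotient estimate
lemma quot_est {A B C D δ : ℝ} (hA : 0 ≤ A) (hAB : A ≤ B) (hC : 0 ≤ C) (hCD : C ≤ D)
    (h1 : |A - C| ≤ δ) (h2 : |B - D| ≤ δ) :
    |(1 + A) / (1 + B) - (1 + C) / (1 + D)| ≤ 2 * δ := by
  have hB1 : (1:ℝ) ≤ 1 + B := by linarith
  have hD1 : (1:ℝ) ≤ 1 + D := by linarith
  have hBpos : (0:ℝ) < 1 + B := by linarith
  have hDpos : (0:ℝ) < 1 + D := by linarith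
  have key : (1 + A) / (1 + B) - (1 + C) / (1 + D)
      = (A - C) / (1 + B) + (1 + C) / (1 + D) * ((D - B) / (1 + B)) := by
    field_simp; ring
  rw [key]
  have t1 : |(A - C) / (1 + B)| ≤ δ := by
    rw [abs_div, abs_of_pos hBpos]
    calc |A - C| / (1 + B) ≤ |A - C| / 1 := by
          apply div_le_div_of_nonneg_left (abs_nonneg _) one_pos hB1
      _ = |A - C| := div_one _
      _ ≤ δ := h1
  have t2 : |(1 + C) / (1 + D) * ((D - B) / (1 + B))| ≤ δ := by
    rw [abs_mul]
    have r1 : |(1 + C) / (1 + D)| ≤ 1 := by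
      rw [abs_of_pos (by positivity : (0:ℝ) < (1 + C) / (1 + D))]
      rw [div_le_one hDpos]; linarith
    have r2 : |(D - B) / (1 + B)| ≤ δ := by
      rw [abs_div, abs_of_pos hBpos]
      calc |D - B| / (1 + B) ≤ |D - B| / 1 :=
            div_le_div_of_nonneg_left (abs_nonneg _) one_pos hB1
        _ = |D - B| := div_one _
        _ = |B - D| := abs_sub_comm _ _
        _ ≤ δ := h2
    calc |(1 + C) / (1 + D)| * |(D - B) / (1 + B)| ≤ 1 * δ :=
          mul_le_mul r1 r2 (abs_nonneg _) one_pos.le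
      _ = δ := one_mul _
  calc |(A - C) / (1 + B) + (1 + C) / (1 + D) * ((D - B) / (1 + B))|
      ≤ _ + _ := abs_add_le _ _
    _ ≤ δ + δ := add_le_add t1 t2
    _ = 2 * δ := by ring


-- Phi only depends on values on [α₀, η]
lemma Phi_congr {a ν α₀ ξ : ℝ} {L N : ℝ → ℝ} {u v : ℝ → ℝ}
    (h : ∀ t ∈ Icc α₀ ξ, u t = v t) {η : ℝ} (hη : η ∈ Icc α₀ ξ) :
    Phi a ν L N α₀ u η = Phi a ν L N α₀ v η := by
  unfold Phi
  congr 1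
  apply intervalIntegral.integral_congr
  intro s hs
  rw [uIcc_of_le hη.1] at hs
  have hsI : s ∈ Icc α₀ ξ := ⟨hs.1, hs.2.trans hη.2⟩
  have hE : Efun a L N α₀ u s = Efun a L N α₀ v s := by
    unfold Efun
    congr 2
    apply intervalIntegral.integral_congr
    intro t ht
    rw [uIcc_of_le hs.1] at ht
    have htI : t ∈ Icc α₀ ξ := ⟨ht.1, ht.2.trans hsI.2⟩
    simp only []
    rw [h t htI]
  simp only []
  rw [hE, h s hsI]

theorem stmt_11 (a ν α₀ ξ : ℝ) (L N : ℝ → ℝ) (Lm LM Nm NM Ltil Ntil p : ℝ)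
    (ha : 0 < a) (hν0 : 0 < ν) (hν1 : ν < 1) (hα₀ : 0 < α₀) (hαξ : α₀ < ξ)
    (hp : 0 < p)
    (hLcont : Continuous L) (hNcont : Continuous N)
    (hLm : 0 < Lm) (hNm : 0 < Nm) (hLtil : 0 < Ltil) (hNtil : 0 < Ntil)
    (hL : ∀ x : ℝ, Lm ≤ L x ∧ L x ≤ LM)
    (hN : ∀ x : ℝ, Nm ≤ N x ∧ N x ≤ NM)
    (hLlip : ∀ x y : ℝ, |L x - L y| ≤ Ltil * |x - y|)
    (hNlip : ∀ x y : ℝ, |N x - N y| ≤ Ntil * |x - y|)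
    (hcontr : 2 * p * PhiTilde a ν Lm NM Ltil Ntil α₀ ξ < 1) :
    ∃ u : ℝ → ℝ,
      (ContinuousOn u (Icc α₀ ξ) ∧
        ∀ η ∈ Icc α₀ ξ,
          u η = (1 + p * Phi a ν L N α₀ u η) / (1 + p * Phi a ν L N α₀ u ξ)) ∧
      ∀ v : ℝ → ℝ, ContinuousOn v (Icc α₀ ξ) →
        (∀ η ∈ Icc α₀ ξ,
          v η = (1 + p * Phi a ν L N α₀ v η) / (1 + p * Phi a ν L N α₀ v ξ)) →
        EqOn v u (Icc α₀ ξ) := by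
  have hle : α₀ ≤ ξ := hαξ.le
  have hL' : ∀ x, Lm ≤ L x := fun x => (hL x).1
  have hN0 : ∀ x, 0 ≤ N x := fun x => hNm.le.trans (hN x).1
  have hNM' : ∀ x, N x ≤ NM := fun x => (hN x).2
  have hNM0 : 0 ≤ NM := (hN0 0).trans (hNM' 0)
  have hPT0 : 0 ≤ PhiTilde a ν Lm NM Ltil Ntil α₀ ξ :=
    PhiTilde_nonneg ha hν0 hν1 hα₀ hle hLm hLtil hNtil hNM0
  have hξI : ξ ∈ Icc α₀ ξ := ⟨hle, le_rfl⟩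
  -- the extension operator
  set ext : C(Icc α₀ ξ, ℝ) → ℝ → ℝ := fun w => IccExtend hle ⇑w with hext
  have hextc : ∀ w : C(Icc α₀ ξ, ℝ), Continuous (ext w) := fun w => w.continuous.Icc_extend'
  have hexteq : ∀ (w : C(Icc α₀ ξ, ℝ)) t (ht : t ∈ Icc α₀ ξ), ext w t = w ⟨t, ht⟩ :=
    fun w t ht => IccExtend_of_mem hle _ ht
  -- the operator T
  set T : C(Icc α₀ ξ, ℝ) → C(Icc α₀ ξ, ℝ) := fun w =>
    ⟨fun x => (1 + p * Phi a ν L N α₀ (ext w) x) / (1 + p * Phi a ν L N α₀ (ext w) ξ),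
      by
        apply Continuous.div_const
        exact continuous_const.add (continuous_const.mul
          ((Phi_contOn hν0 hα₀ hle hLm hL' hLcont hNcont (hextc w)).comp_continuous
            continuous_subtype_val (fun x => x.2)))⟩ with hT
  have hTapp : ∀ (w : C(Icc α₀ ξ, ℝ)) (x : Icc α₀ ξ),
      T w x = (1 + p * Phi a ν L N α₀ (ext w) x) / (1 + p * Phi a ν L N α₀ (ext w) ξ) :=
    fun w x => rfl
  -- contraction estimate
  have key : ∀ w₁ w₂ : C(Icc α₀ ξ, ℝ), ∀ x : Icc α₀ ξ,
      dist (T w₁ x) (T w₂ x)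
        ≤ 2 * p * PhiTilde a ν Lm NM Ltil Ntil α₀ ξ * dist w₁ w₂ := by
    intro w₁ w₂ x
    rw [Real.dist_eq, hTapp, hTapp]
    have hMnn : (0:ℝ) ≤ dist w₁ w₂ := dist_nonneg
    have huv : ∀ t ∈ Icc α₀ ξ, |ext w₁ t - ext w₂ t| ≤ dist w₁ w₂ := by
      intro t ht
      rw [hexteq w₁ t ht, hexteq w₂ t ht, ← Real.dist_eq]
      exact ContinuousMap.dist_apply_le_dist _
    have hlip1 := Phi_lip (u := ext w₁) (v := ext w₂) (L := L) (N := N)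
      ha hν0 hν1 hα₀ hle hLm hLtil hNtil hL' hN0 hNM' hLlip hNlip hLcont hNcont
      (hextc w₁) (hextc w₂) hMnn huv x.2
    have hlip2 := Phi_lip (u := ext w₁) (v := ext w₂) (L := L) (N := N)
      ha hν0 hν1 hα₀ hle hLm hLtil hNtil hL' hN0 hNM' hLlip hNlip hLcont hNcont
      (hextc w₁) (hextc w₂) hMnn huv hξI
    have hq := quot_est (A := p * Phi a ν L N α₀ (ext w₁) x)
      (B := p * Phi a ν L N α₀ (ext w₁) ξ)
      (C := p * Phi a ν L N α₀ (ext w₂) x)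
      (D := p * Phi a ν L N α₀ (ext w₂) ξ)
      (δ := p * (PhiTilde a ν Lm NM Ltil Ntil α₀ ξ * dist w₁ w₂))
      (mul_nonneg hp.le (Phi_nonneg hν0 hα₀ hLm hL' x.2.1))
      (mul_le_mul_of_nonneg_left
        (Phi_mono hν0 hα₀ hLm hL' hLcont hNcont (hextc w₁) x.2) hp.le)
      (mul_nonneg hp.le (Phi_nonneg hν0 hα₀ hLm hL' x.2.1))
      (mul_le_mul_of_nonneg_left
        (Phi_mono hν0 hα₀ hLm hL' hLcont hNcont (hextc w₂) x.2) hp.le)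
      (by rw [← mul_sub, abs_mul, abs_of_nonneg hp.le]
          exact mul_le_mul_of_nonneg_left hlip1 hp.le)
      (by rw [← mul_sub, abs_mul, abs_of_nonneg hp.le]
          exact mul_le_mul_of_nonneg_left hlip2 hp.le)
    calc |(1 + p * Phi a ν L N α₀ (ext w₁) ↑x) / (1 + p * Phi a ν L N α₀ (ext w₁) ξ)
          - (1 + p * Phi a ν L N α₀ (ext w₂) ↑x) / (1 + p * Phi a ν L N α₀ (ext w₂) ξ)|
        ≤ 2 * (p * (PhiTilde a ν Lm NM Ltil Ntil α₀ ξ * dist w₁ w₂)) := hq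
      _ = 2 * p * PhiTilde a ν Lm NM Ltil Ntil α₀ ξ * dist w₁ w₂ := by ring
  -- the contraction
  set K : NNReal := ⟨2 * p * PhiTilde a ν Lm NM Ltil Ntil α₀ ξ,
    by positivity⟩ with hK
  have hTlip : LipschitzWith K T := by
    apply LipschitzWith.of_dist_le_mul
    intro w₁ w₂
    refine (ContinuousMap.dist_le (mul_nonneg K.2 dist_nonneg)).mpr fun x => ?_
    exact key w₁ w₂ x
  have hK1 : K < 1 := by
    rw [← NNReal.coe_lt_coe]
    exact hcontr
  have contr : ContractingWith K T := ⟨hK1, hTlip⟩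
  set φ : C(Icc α₀ ξ, ℝ) := ContractingWith.fixedPoint T contr with hφ
  have hfix : T φ = φ := contr.fixedPoint_isFixedPt
  refine ⟨ext φ, ⟨(hextc φ).continuousOn, ?_⟩, ?_⟩
  · intro η hη
    have h1 : ext φ η = φ ⟨η, hη⟩ := hexteq φ η hη
    rw [h1]
    conv_lhs => rw [← hfix]
    rw [hTapp]
  · intro v hvcont hveq
    set w : C(Icc α₀ ξ, ℝ) := ⟨(Icc α₀ ξ).restrict v, hvcont.restrict⟩ with hw
    have hagree : ∀ t ∈ Icc α₀ ξ, ext w t = v t := by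
      intro t ht
      rw [hexteq w t ht]
      rfl
    have hfixw : T w = w := by
      apply ContinuousMap.ext
      intro x
      rw [hTapp, Phi_congr hagree x.2, Phi_congr hagree hξI, ← hveq x.1 x.2]
      rfl
    have hwφ : w = φ := contr.fixedPoint_unique hfixw
    intro t ht
    have : v t = w ⟨t, ht⟩ := rfl
    rw [this, hwφ, ← hexteq φ t ht]
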